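/- Let R = M_k(F) be the ring of all k×k matrices over a field F with k ≥ 3, and let b, c ∈ R. Suppose that b[x₁,x₂] + [x₁,x₂]c ∈ Z(R) for all x₁, x₂ ∈ R. Then b and c are scalar matrices, i.e., b, c ∈ F·I_k. -/

import Mathlib

open Matrix

private lemma third_index {k : ℕ} (hk : 3 ≤ k) (i j : Fin k) :
    ∃ p : Fin k, p ≠ i ∧ p ≠ j := by
  by_contra hcon
  push_neg at hcon
  have hsub : (Finset.univ : Finset (Fin k)) ⊆ {i, j} := by
    intro p _
    rcases eq_or_ne p i with rfl | hpi
    · simp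
    · simp [hcon p hpi]
  have := Finset.card_le_card hsub
  have h2 : ({i, j} : Finset (Fin k)).card ≤ 2 := Finset.card_insert_le _ _ |>.trans (by simp)
  simp [Finset.card_univ] at this
  omega

/-- Let `R = M_k(F)`, `k ≥ 3`.  If `b[x₁,x₂] + [x₁,x₂]c ∈ Z(R)`
for all `x₁, x₂ ∈ R`, then `b` and `c` are scalar matrices. -/
theorem stmt_1 {F : Type*} [Field F] {k : ℕ} (hk : 3 ≤ k)
    (b c : Matrix (Fin k) (Fin k) F)
    (h : ∀ x₁ x₂ : Matrix (Fin k) (Fin k) F,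
      ∀ y : Matrix (Fin k) (Fin k) F,
        (b * (x₁ * x₂ - x₂ * x₁) + (x₁ * x₂ - x₂ * x₁) * c) * y =
          y * (b * (x₁ * x₂ - x₂ * x₁) + (x₁ * x₂ - x₂ * x₁) * c)) :
    (∃ β : F, b = β • (1 : Matrix (Fin k) (Fin k) F)) ∧
    (∃ γ : F, c = γ • (1 : Matrix (Fin k) (Fin k) F)) := by
  set E : Fin k → Fin k → Matrix (Fin k) (Fin k) F := fun i j => single i j 1 with hE
  -- Step 1: for i ≠ j, M := b * E i j + E i j * c is zero.
  have key : ∀ i j : Fin k, i ≠ j → b * E i j + E i j * c = 0 := by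
    intro i j hij
    have hcomm : E i j * E j j - E j j * E i j = E i j := by
      rw [hE]
      simp only [single_mul_single_same, Matrix.single_mul_single_of_ne _ _ _ _ hij.symm, one_mul,
        sub_zero]
    have hcentral : ∀ y, (b * E i j + E i j * c) * y = y * (b * E i j + E i j * c) := by
      intro y
      have := h (E i j) (E j j) y
      rwa [hcomm] at this
    obtain ⟨r, hr⟩ := mem_range_scalar_of_commute_single
      (M := b * E i j + E i j * c) (fun p q hpq => (hcentral _).symm)
    -- the scalar r is 0: look at entry (p, p) with p ∉ {i, j}
    obtain ⟨p, hpi, hpj⟩ := third_index hk i j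
    have hr0 : r = 0 := by
      have := congrArg (fun M => M p p) hr
      simp only [scalar_apply, diagonal_apply_eq, Matrix.add_apply, hE] at this
      rw [mul_single_apply_of_ne (hbj := hpj),
        single_mul_apply_of_ne (h := hpi)] at this
      simpa using this
    rw [hr0] at hr
    rw [← hr]
    simp
  -- entrywise consequences
  have hb_off : ∀ p i : Fin k, p ≠ i → b p i = 0 := by
    intro p i hpi
    obtain ⟨j, hji, hjp⟩ := third_index hk i p
    have := congrArg (fun M => M p j) (key i j (Ne.symm hji))
    simp only [Matrix.add_apply, Matrix.zero_apply, hE] at this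
    rw [mul_single_apply_same,
      single_mul_apply_of_ne (h := hpi)] at this
    simpa using this
  have hc_off : ∀ j q : Fin k, j ≠ q → c j q = 0 := by
    intro j q hjq
    obtain ⟨i, hij, hiq⟩ := third_index hk j q
    have := congrArg (fun M => M i q) (key i j hij)
    simp only [Matrix.add_apply, Matrix.zero_apply, hE] at this
    rw [mul_single_apply_of_ne (hbj := hjq.symm),
      single_mul_apply_same] at this
    simpa using this
  have hdiag : ∀ i j : Fin k, i ≠ j → b i i + c j j = 0 := by
    intro i j hij
    have := congrArg (fun M => M i j) (key i j hij)
    simp only [Matrix.add_apply, Matrix.zero_apply, hE] at this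
    rw [mul_single_apply_same, single_mul_apply_same] at this
    simpa using this
  -- conclude
  have h0 : (0 : ℕ) < k := by omega
  set o : Fin k := ⟨0, h0⟩ with ho
  set γ : F := c o o with hγ
  have hc_diag : ∀ j : Fin k, c j j = γ := by
    intro j
    rcases eq_or_ne j o with rfl | hjo
    · rfl
    · obtain ⟨i, hij, hio⟩ := third_index hk j o
      have h1 := hdiag i j hij
      have h2 := hdiag i o hio
      rw [hγ]; linear_combination h1 - h2
  have hb_diag : ∀ i : Fin k, b i i = -γ := by
    intro i
    obtain ⟨j, hji, _⟩ := third_index hk i i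
    have h1 := hdiag i j (Ne.symm hji)
    rw [hc_diag j] at h1
    linear_combination h1
  constructor
  · refine ⟨-γ, ?_⟩
    ext p q
    rcases eq_or_ne p q with rfl | hpq
    · simp [hb_diag p, Matrix.one_apply]
    · simp [hb_off p q hpq, Matrix.one_apply, hpq]
  · refine ⟨γ, ?_⟩
    ext p q
    rcases eq_or_ne p q with rfl | hpq
    · simp [hc_diag p, Matrix.one_apply]
    · simp [hc_off p q hpq, Matrix.one_apply, hpq]
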